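/- For every F ∈ S(ℝᵈ), the composition F∘ρ is a K-invariant Schwartz function on ℝᵐ, and the map F ↦ F∘ρ is a continuous linear operator from S(ℝᵈ) to S(ℝᵐ): for every p ∈ ℕ there exist q ∈ ℕ and C > 0 with ‖F∘ρ‖_{(p,ℝᵐ)} ≤ C ‖F‖_{(q,ℝᵈ)} for all F ∈ S(ℝᵈ). -/

import Mathlib

/-- The `p`-th Schwartz seminorm `‖f‖_{(p)} = sup_{x, |α| ≤ p} (1+|x|)^p |∂^α f(x)|`
(with derivatives of order `j ≤ p` measured by the iterated Fréchet derivative). -/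
noncomputable def snorm' {W : Type*} [NormedAddCommGroup W] [NormedSpace ℝ W]
    (p : ℕ) (f : W → ℂ) : ℝ :=
  ⨆ q : Fin (p + 1) × W, (1 + ‖q.2‖) ^ p * ‖iteratedFDeriv ℝ (q.1 : ℕ) f q.2‖

/-- The action of an `m × m` real matrix on `ℝᵐ` (as Euclidean space). -/
noncomputable def mact {m : ℕ} (A : Matrix (Fin m) (Fin m) ℝ)
    (x : EuclideanSpace ℝ (Fin m)) : EuclideanSpace ℝ (Fin m) :=
  (WithLp.equiv 2 (Fin m → ℝ)).symm (A.mulVec ((WithLp.equiv 2 (Fin m → ℝ)) x))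

/-- The Hilbert map `ρ = (ρ₁,…,ρ_d) : ℝᵐ → ℝᵈ` associated to polynomials `ρ₁,…,ρ_d`. -/
noncomputable def evalMap {m d : ℕ} (ρp : Fin d → MvPolynomial (Fin m) ℝ)
    (x : EuclideanSpace ℝ (Fin m)) : EuclideanSpace ℝ (Fin d) :=
  (WithLp.equiv 2 (Fin d → ℝ)).symm (fun j => MvPolynomial.eval (fun i => x i) (ρp j))

namespace Stmt9Aux

open Function MvPolynomial

variable {E F G : Type*} [NormedAddCommGroup E] [NormedSpace ℝ E]
  [NormedAddCommGroup F] [NormedSpace ℝ F] [NormedAddCommGroup G] [NormedSpace ℝ G]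

lemma tg_clm_comp (L : F →L[ℝ] G) {f : E → F} (hf : Function.HasTemperateGrowth f) :
    Function.HasTemperateGrowth (fun x => L (f x)) := by
  refine ⟨L.contDiff.comp hf.1, fun n => ?_⟩
  obtain ⟨k, C, h⟩ := hf.2 n
  refine ⟨k, ‖L‖ * C, fun x => ?_⟩
  have heq : (fun x => L (f x)) = (L : F → G) ∘ f := rfl
  rw [heq, L.iteratedFDeriv_comp_left (hf.1.contDiffAt (x := x)) (by exact_mod_cast le_top)]
  calc ‖L.compContinuousMultilinearMap (iteratedFDeriv ℝ n f x)‖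
      ≤ ‖L‖ * ‖iteratedFDeriv ℝ n f x‖ := L.norm_compContinuousMultilinearMap_le _
    _ ≤ ‖L‖ * (C * (1 + ‖x‖) ^ k) := by
        have := h x
        have h0 : (0:ℝ) ≤ ‖L‖ := norm_nonneg _
        nlinarith [norm_nonneg (iteratedFDeriv ℝ n f x)]
    _ = ‖L‖ * C * (1 + ‖x‖) ^ k := by ring

lemma tg_add {f g : E → F} (hf : Function.HasTemperateGrowth f)
    (hg : Function.HasTemperateGrowth g) :
    Function.HasTemperateGrowth (fun x => f x + g x) := by
  refine ⟨hf.1.add hg.1, fun n => ?_⟩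
  obtain ⟨k1, C1, hC1, h1⟩ := hf.norm_iteratedFDeriv_le_uniform n
  obtain ⟨k2, C2, hC2, h2⟩ := hg.norm_iteratedFDeriv_le_uniform n
  refine ⟨max k1 k2, C1 + C2, fun x => ?_⟩
  have hx : (1:ℝ) ≤ 1 + ‖x‖ := by simpa using norm_nonneg x
  rw [show (fun x => f x + g x) = f + g from rfl, iteratedFDeriv_add_apply (hf.1.of_le (by exact_mod_cast le_top)).contDiffAt
    (hg.1.of_le (by exact_mod_cast le_top)).contDiffAt]
  calc ‖iteratedFDeriv ℝ n f x + iteratedFDeriv ℝ n g x‖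
      ≤ ‖iteratedFDeriv ℝ n f x‖ + ‖iteratedFDeriv ℝ n g x‖ := norm_add_le _ _
    _ ≤ C1 * (1 + ‖x‖) ^ k1 + C2 * (1 + ‖x‖) ^ k2 :=
        add_le_add (h1 n le_rfl x) (h2 n le_rfl x)
    _ ≤ C1 * (1 + ‖x‖) ^ max k1 k2 + C2 * (1 + ‖x‖) ^ max k1 k2 :=
        add_le_add (mul_le_mul_of_nonneg_left (pow_le_pow_right₀ hx (le_max_left _ _)) hC1)
          (mul_le_mul_of_nonneg_left (pow_le_pow_right₀ hx (le_max_right _ _)) hC2)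
    _ = (C1 + C2) * (1 + ‖x‖) ^ max k1 k2 := by ring

lemma tg_mul {f g : E → ℝ} (hf : Function.HasTemperateGrowth f)
    (hg : Function.HasTemperateGrowth g) :
    Function.HasTemperateGrowth (fun x => f x * g x) := by
  refine ⟨hf.1.mul hg.1, fun n => ?_⟩
  obtain ⟨k1, C1, hC1, h1⟩ := hf.norm_iteratedFDeriv_le_uniform n
  obtain ⟨k2, C2, hC2, h2⟩ := hg.norm_iteratedFDeriv_le_uniform n
  refine ⟨k1 + k2, 2 ^ n * (C1 * C2), fun x => ?_⟩
  calc ‖iteratedFDeriv ℝ n (fun y => f y * g y) x‖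
      ≤ ∑ i ∈ Finset.range (n + 1),
          (n.choose i : ℝ) * ‖iteratedFDeriv ℝ i f x‖ * ‖iteratedFDeriv ℝ (n - i) g x‖ :=
        norm_iteratedFDeriv_mul_le hf.1 hg.1 x (by exact_mod_cast le_top)
    _ ≤ ∑ i ∈ Finset.range (n + 1),
          (n.choose i : ℝ) * (C1 * (1 + ‖x‖) ^ k1) * (C2 * (1 + ‖x‖) ^ k2) := by
        refine Finset.sum_le_sum fun i hi => ?_
        have hi' : i ≤ n := Nat.lt_succ_iff.mp (Finset.mem_range.mp hi)
        have a := h1 i hi' x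
        have b := h2 (n - i) (Nat.sub_le _ _) x
        exact mul_le_mul (mul_le_mul_of_nonneg_left a (by positivity)) b (norm_nonneg _)
          (by positivity)
    _ = (∑ i ∈ Finset.range (n + 1), (n.choose i : ℝ)) * (C1 * C2 * (1 + ‖x‖) ^ (k1 + k2)) := by
        rw [Finset.sum_mul]
        refine Finset.sum_congr rfl fun i _ => ?_
        rw [pow_add]; ring
    _ = 2 ^ n * (C1 * C2) * (1 + ‖x‖) ^ (k1 + k2) := by
        norm_cast
        rw [Nat.sum_range_choose]
        push_cast
        ring

lemma tg_eval {m : ℕ} (P : MvPolynomial (Fin m) ℝ) :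
    Function.HasTemperateGrowth
      (fun x : EuclideanSpace ℝ (Fin m) => MvPolynomial.eval (fun i => x i) P) := by
  induction P using MvPolynomial.induction_on with
  | C a => simpa using Function.HasTemperateGrowth.const (E := EuclideanSpace ℝ (Fin m)) a
  | add p q hp hq => simpa using tg_add hp hq
  | mul_X p i hp =>
      simp only [map_mul, MvPolynomial.eval_X]
      exact tg_mul hp (by simpa using (EuclideanSpace.proj (𝕜 := ℝ) i).hasTemperateGrowth)



lemma tg_sum {ι : Type*} (s : Finset ι) (f : ι → E → F)
    (hf : ∀ i ∈ s, Function.HasTemperateGrowth (f i)) :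
    Function.HasTemperateGrowth (fun x => ∑ i ∈ s, f i x) := by
  classical
  induction s using Finset.induction_on with
  | empty => simpa using Function.HasTemperateGrowth.const (E := E) (0 : F)
  | insert a s hnot ih =>
      simp only [Finset.sum_insert hnot]
      exact tg_add (hf a (Finset.mem_insert_self a s))
        (ih fun i hi => hf i (Finset.mem_insert_of_mem hi))

lemma tg_evalMap {m d : ℕ} (ρp : Fin d → MvPolynomial (Fin m) ℝ) :
    Function.HasTemperateGrowth (evalMap ρp) := by
  have heq : evalMap ρp = fun x => ∑ j : Fin d,
      (ContinuousLinearMap.toSpanSingleton ℝ (EuclideanSpace.single j (1 : ℝ)))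
        (MvPolynomial.eval (fun i => x i) (ρp j)) := by
    funext x
    ext i
    have h1 : (∑ j : Fin d, (MvPolynomial.eval (fun i => x i) (ρp j)) •
        EuclideanSpace.single j (1:ℝ)) i
        = ∑ j : Fin d, ((MvPolynomial.eval (fun i => x i) (ρp j)) •
            EuclideanSpace.single j (1:ℝ)) i :=
      by rw [WithLp.ofLp_sum, Finset.sum_apply]
    simp only [ContinuousLinearMap.toSpanSingleton_apply]
    rw [h1]
    simp [evalMap, EuclideanSpace.single_apply]
  rw [heq]
  exact tg_sum _ _ fun j _ => tg_clm_comp _ (tg_eval (ρp j))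

lemma abs_coord_le {d : ℕ} (y : EuclideanSpace ℝ (Fin d)) (j : Fin d) : |y j| ≤ ‖y‖ := by
  rw [EuclideanSpace.norm_eq]
  refine Real.le_sqrt_of_sq_le ?_
  rw [sq_abs]
  have : y j ^ 2 = ‖y j‖ ^ 2 := by rw [Real.norm_eq_abs, sq_abs]
  rw [this]
  exact Finset.single_le_sum (f := fun i => ‖y i‖ ^ 2) (fun i _ => by positivity)
    (Finset.mem_univ j)

lemma eval_growth {d : ℕ} (Q : MvPolynomial (Fin d) ℝ) :
    ∃ (k : ℕ) (C : ℝ), 0 ≤ C ∧ ∀ y : EuclideanSpace ℝ (Fin d),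
      |MvPolynomial.eval (fun j => y j) Q| ≤ C * (1 + ‖y‖) ^ k := by
  induction Q using MvPolynomial.induction_on with
  | C a => exact ⟨0, |a|, abs_nonneg a, fun y => by simp⟩
  | add p q hp hq =>
      obtain ⟨k1, C1, hC1, h1⟩ := hp
      obtain ⟨k2, C2, hC2, h2⟩ := hq
      refine ⟨max k1 k2, C1 + C2, by positivity, fun y => ?_⟩
      have hy : (1:ℝ) ≤ 1 + ‖y‖ := by simpa using norm_nonneg y
      calc |MvPolynomial.eval (fun j => y j) (p + q)|
          ≤ |MvPolynomial.eval (fun j => y j) p| + |MvPolynomial.eval (fun j => y j) q| := by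
            rw [map_add]; exact abs_add_le _ _
        _ ≤ C1 * (1 + ‖y‖) ^ k1 + C2 * (1 + ‖y‖) ^ k2 := add_le_add (h1 y) (h2 y)
        _ ≤ (C1 + C2) * (1 + ‖y‖) ^ max k1 k2 := by
            rw [add_mul]
            exact add_le_add
              (mul_le_mul_of_nonneg_left (pow_le_pow_right₀ hy (le_max_left _ _)) hC1)
              (mul_le_mul_of_nonneg_left (pow_le_pow_right₀ hy (le_max_right _ _)) hC2)
  | mul_X p j hp =>
      obtain ⟨k, C, hC, h⟩ := hp
      refine ⟨k + 1, C, hC, fun y => ?_⟩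
      calc |MvPolynomial.eval (fun j => y j) (p * MvPolynomial.X j)|
          = |MvPolynomial.eval (fun j => y j) p| * |y j| := by
            rw [map_mul, MvPolynomial.eval_X, abs_mul]
        _ ≤ (C * (1 + ‖y‖) ^ k) * (1 + ‖y‖) :=
            mul_le_mul (h y) ((abs_coord_le y j).trans (by simp [norm_nonneg]))
              (abs_nonneg _) (by positivity)
        _ = C * (1 + ‖y‖) ^ (k + 1) := by rw [pow_succ]; ring



lemma mact_sum_sq {m : ℕ} (k : Matrix.orthogonalGroup (Fin m) ℝ)
    (x : EuclideanSpace ℝ (Fin m)) :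
    ∑ i, (mact (k : Matrix (Fin m) (Fin m) ℝ) x i) ^ 2 = ∑ i, (x i) ^ 2 := by
  set A := (k : Matrix (Fin m) (Fin m) ℝ) with hA
  have hmem : A ∈ Matrix.orthogonalGroup (Fin m) ℝ := k.2
  rw [Matrix.mem_orthogonalGroup_iff'] at hmem
  have hAt : star A = A.transpose := by
    ext i j
    simp [Matrix.star_apply, Matrix.transpose_apply]
  let v : Fin m → ℝ := fun i => x i
  have hco : ∀ i, mact A x i = A.mulVec v i := fun i => rfl
  simp only [hco]
  have h1 : ∑ i, (A.mulVec v i) ^ 2 = dotProduct (A.mulVec v) (A.mulVec v) := by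
    simp [dotProduct, sq]
  have h2 : ∑ i, (v i) ^ 2 = dotProduct v v := by simp [dotProduct, sq]
  rw [h1, h2, Matrix.dotProduct_mulVec, ← Matrix.mulVec_transpose,
    Matrix.mulVec_mulVec]
  simp only [Matrix.star_eq_conjTranspose, Matrix.conjTranspose_eq_transpose_of_trivial, hmem]
  simp [dotProduct]

lemma sem_le_snorm {W : Type*} [NormedAddCommGroup W] [NormedSpace ℝ W]
    (q k n : ℕ) (hk : k ≤ q) (hn : n ≤ q) (F : SchwartzMap W ℂ) :
    SchwartzMap.seminorm ℂ k n F ≤ snorm' q ⇑F := by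
  have hbdd : BddAbove (Set.range fun jx : Fin (q + 1) × W =>
      (1 + ‖jx.2‖) ^ q * ‖iteratedFDeriv ℝ (jx.1 : ℕ) (⇑F) jx.2‖) := by
    refine ⟨2 ^ q * ((Finset.Iic ((q, q) : ℕ × ℕ)).sup (schwartzSeminormFamily ℂ W ℂ)) F, ?_⟩
    rintro r ⟨⟨j, x⟩, rfl⟩
    exact SchwartzMap.one_add_le_sup_seminorm_apply (m := ((q, q) : ℕ × ℕ)) le_rfl
      (Nat.lt_succ_iff.mp j.2) F x
  refine SchwartzMap.seminorm_le_bound ℂ k n F ?_ fun x => ?_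
  · refine Real.iSup_nonneg fun jx => by positivity
  · have h1 : ‖x‖ ^ k * ‖iteratedFDeriv ℝ n (⇑F) x‖
        ≤ (1 + ‖x‖) ^ q * ‖iteratedFDeriv ℝ n (⇑F) x‖ := by
      have : ‖x‖ ^ k ≤ (1 + ‖x‖) ^ q := by
        calc ‖x‖ ^ k ≤ (1 + ‖x‖) ^ k :=
              pow_le_pow_left₀ (norm_nonneg _) (by simpa using zero_le_one) k
          _ ≤ (1 + ‖x‖) ^ q :=
              pow_le_pow_right₀ (by simpa using norm_nonneg x) hk
      exact mul_le_mul_of_nonneg_right this (norm_nonneg _)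
    refine h1.trans ?_
    exact le_ciSup hbdd ((⟨n, Nat.lt_succ_of_le hn⟩ : Fin (q + 1)), x)

lemma snorm_le_sup {W : Type*} [NormedAddCommGroup W] [NormedSpace ℝ W] [Nonempty W]
    (p : ℕ) (G : SchwartzMap W ℂ) :
    snorm' p ⇑G ≤ 2 ^ p * ((Finset.Iic ((p, p) : ℕ × ℕ)).sup
      (schwartzSeminormFamily ℂ W ℂ)) G := by
  refine ciSup_le ?_
  rintro ⟨j, x⟩
  exact SchwartzMap.one_add_le_sup_seminorm_apply (m := ((p, p) : ℕ × ℕ)) le_rfl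
    (Nat.lt_succ_iff.mp j.2) G x

lemma snorm_nonneg {W : Type*} [NormedAddCommGroup W] [NormedSpace ℝ W]
    (p : ℕ) (f : W → ℂ) : 0 ≤ snorm' p f :=
  Real.iSup_nonneg fun jx => by positivity

end Stmt9Aux

/-- For every `F ∈ 𝓢(ℝᵈ)`, the composition `F ∘ ρ` with the Hilbert map is a `K`-invariant
Schwartz function on `ℝᵐ`, and `F ↦ F ∘ ρ` is a continuous linear operator
`𝓢(ℝᵈ) → 𝓢(ℝᵐ)`: for every `p` there are `q` and `C > 0` with
`‖F∘ρ‖_{(p,ℝᵐ)} ≤ C ‖F‖_{(q,ℝᵈ)}`. -/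
theorem stmt9 (m d : ℕ) (hm : 1 ≤ m)
    (K : Subgroup (Matrix.orthogonalGroup (Fin m) ℝ))
    (hK : IsClosed (K : Set (Matrix.orthogonalGroup (Fin m) ℝ)))
    (ρp : Fin d → MvPolynomial (Fin m) ℝ)
    (hρinv : ∀ j, ∀ k ∈ K, ∀ x : EuclideanSpace ℝ (Fin m),
      MvPolynomial.eval (fun i => mact (k : Matrix (Fin m) (Fin m) ℝ) x i) (ρp j) =
        MvPolynomial.eval (fun i => x i) (ρp j))
    (hρgen : ∀ P : MvPolynomial (Fin m) ℝ,
      (∀ k ∈ K, ∀ x : EuclideanSpace ℝ (Fin m),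
        MvPolynomial.eval (fun i => mact (k : Matrix (Fin m) (Fin m) ℝ) x i) P =
          MvPolynomial.eval (fun i => x i) P) →
      P ∈ Algebra.adjoin ℝ (Set.range ρp)) :
    ∃ T : SchwartzMap (EuclideanSpace ℝ (Fin d)) ℂ →L[ℂ]
        SchwartzMap (EuclideanSpace ℝ (Fin m)) ℂ,
      (∀ (F : SchwartzMap (EuclideanSpace ℝ (Fin d)) ℂ) (x : EuclideanSpace ℝ (Fin m)),
        T F x = F (evalMap ρp x)) ∧
      (∀ F : SchwartzMap (EuclideanSpace ℝ (Fin d)) ℂ,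
        ∀ k ∈ K, ∀ x, T F (mact (k : Matrix (Fin m) (Fin m) ℝ) x) = T F x) ∧
      ∀ p : ℕ, ∃ (q : ℕ) (C : ℝ), 0 < C ∧
        ∀ F : SchwartzMap (EuclideanSpace ℝ (Fin d)) ℂ,
          snorm' p ⇑(T F) ≤ C * snorm' q ⇑F := by
  classical
  set g := evalMap ρp with hgdef
  have hg : Function.HasTemperateGrowth g := Stmt9Aux.tg_evalMap ρp
  -- upper bound via the invariant polynomial ∑ Xᵢ²
  have hupper : ∃ (kk : ℕ) (C : ℝ), ∀ x, ‖x‖ ≤ C * (1 + ‖g x‖) ^ kk := by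
    set P0 : MvPolynomial (Fin m) ℝ := ∑ i, (MvPolynomial.X i) ^ 2 with hP0
    have hP0eval : ∀ y : EuclideanSpace ℝ (Fin m),
        MvPolynomial.eval (fun i => y i) P0 = ∑ i, (y i) ^ 2 := by
      intro y; simp [hP0]
    have hP0inv : ∀ k ∈ K, ∀ x : EuclideanSpace ℝ (Fin m),
        MvPolynomial.eval (fun i => mact (k : Matrix (Fin m) (Fin m) ℝ) x i) P0 =
          MvPolynomial.eval (fun i => x i) P0 := by
      intro k hk x
      rw [hP0eval, hP0eval]
      exact Stmt9Aux.mact_sum_sq k x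
    have hmem := hρgen P0 hP0inv
    rw [Algebra.adjoin_range_eq_range_aeval] at hmem
    obtain ⟨Q, hQ⟩ := hmem
    obtain ⟨kk, C, hC0, hCb⟩ := Stmt9Aux.eval_growth Q
    refine ⟨kk, 1 + C, fun x => ?_⟩
    have hQ' : MvPolynomial.aeval ρp Q = P0 := hQ
    have haev : ∀ {n : ℕ} (f : Fin n → ℝ) (pp : MvPolynomial (Fin n) ℝ),
        MvPolynomial.aeval f pp = MvPolynomial.eval f pp := by
      intro n f pp
      exact RingHom.congr_fun (MvPolynomial.coe_aeval_eq_eval (f := f)) pp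
    have e1 : MvPolynomial.eval (fun i => x i) P0
        = MvPolynomial.eval (fun j => g x j) Q := by
      rw [← hQ', ← haev (fun i => x i) (MvPolynomial.aeval ρp Q),
        MvPolynomial.aeval_eq_bind₁, MvPolynomial.aeval_bind₁, haev]
      congr 1
    have e2 : ‖x‖ ^ 2 = MvPolynomial.eval (fun i => x i) P0 := by
      rw [hP0eval, EuclideanSpace.norm_eq, Real.sq_sqrt (by positivity)]
      refine Finset.sum_congr rfl fun i _ => ?_
      rw [Real.norm_eq_abs, sq_abs]
    have e3 : ‖x‖ ^ 2 ≤ C * (1 + ‖g x‖) ^ kk := by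
      rw [e2, e1]
      exact (le_abs_self _).trans (hCb (g x))
    have h4 : (1 : ℝ) ≤ (1 + ‖g x‖) ^ kk :=
      one_le_pow₀ (by simpa using norm_nonneg (g x))
    nlinarith [norm_nonneg x, sq_nonneg (‖x‖ - 1)]
  set T : SchwartzMap (EuclideanSpace ℝ (Fin d)) ℂ →L[ℂ]
      SchwartzMap (EuclideanSpace ℝ (Fin m)) ℂ := SchwartzMap.compCLM ℂ hg hupper with hT
  have hTapp : ∀ (F : SchwartzMap (EuclideanSpace ℝ (Fin d)) ℂ)
      (x : EuclideanSpace ℝ (Fin m)), T F x = F (g x) := fun F x => rfl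
  refine ⟨T, fun F x => hTapp F x, ?_, ?_⟩
  · -- K-invariance
    intro F k hk x
    rw [hTapp, hTapp]
    congr 1
    rw [hgdef, evalMap, evalMap]
    congr 1
    funext j
    exact hρinv j k hk x
  · -- seminorm bounds
    intro p
    set fam := schwartzSeminormFamily ℂ (EuclideanSpace ℝ (Fin d)) ℂ with hfam
    set famm := schwartzSeminormFamily ℂ (EuclideanSpace ℝ (Fin m)) ℂ with hfamm
    have hbnd : ∀ i : ℕ × ℕ, ∃ (s : Finset (ℕ × ℕ)) (C : NNReal), C ≠ 0 ∧
        (famm i).comp (T : SchwartzMap (EuclideanSpace ℝ (Fin d)) ℂ →ₗ[ℂ]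
          SchwartzMap (EuclideanSpace ℝ (Fin m)) ℂ) ≤ C • s.sup fam := by
      intro i
      refine Seminorm.bound_of_continuous
        (schwartz_withSeminorms ℂ (EuclideanSpace ℝ (Fin d)) ℂ) _ ?_
      have hc1 : Continuous (famm i) :=
        (schwartz_withSeminorms ℂ (EuclideanSpace ℝ (Fin m)) ℂ).continuous_seminorm i
      exact hc1.comp T.continuous
    choose s Cs hCs0 hle using hbnd
    set S0 : Finset (ℕ × ℕ) := (Finset.Iic ((p, p) : ℕ × ℕ)).biUnion s with hS0
    set q : ℕ := S0.sup (fun j => max j.1 j.2) with hq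
    refine ⟨q, 2 ^ p * ∑ i ∈ Finset.Iic ((p, p) : ℕ × ℕ), (Cs i : ℝ), ?_, fun F => ?_⟩
    · have : ∀ i ∈ Finset.Iic ((p, p) : ℕ × ℕ), (0 : ℝ) < (Cs i : ℝ) := by
        intro i _
        have : (0 : NNReal) < Cs i := pos_iff_ne_zero.mpr (hCs0 i)
        exact_mod_cast this
      have hpos : (0 : ℝ) < ∑ i ∈ Finset.Iic ((p, p) : ℕ × ℕ), (Cs i : ℝ) :=
        Finset.sum_pos this ⟨(0, 0), by simp⟩
      positivity
    · have hsub : ∀ i ∈ Finset.Iic ((p, p) : ℕ × ℕ), (s i) ⊆ S0 := fun i hi =>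
        Finset.subset_biUnion_of_mem s hi
      have hjq : ∀ j ∈ S0, j.1 ≤ q ∧ j.2 ≤ q := by
        intro j hj
        exact ⟨le_trans (le_max_left _ _) (Finset.le_sup (f := fun j : ℕ × ℕ => max j.1 j.2) hj),
          le_trans (le_max_right _ _) (Finset.le_sup (f := fun j : ℕ × ℕ => max j.1 j.2) hj)⟩
      have hsupq : ∀ i ∈ Finset.Iic ((p, p) : ℕ × ℕ),
          ((s i).sup fam) F ≤ snorm' q ⇑F := by
        intro i hi
        refine Seminorm.finset_sup_apply_le (Stmt9Aux.snorm_nonneg q ⇑F) fun j hj => ?_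
        have hjS := hsub i hi hj
        exact Stmt9Aux.sem_le_snorm q j.1 j.2 (hjq j hjS).1 (hjq j hjS).2 F
      have h1 : snorm' p ⇑(T F) ≤ 2 ^ p * ((Finset.Iic ((p, p) : ℕ × ℕ)).sup famm) (T F) :=
        Stmt9Aux.snorm_le_sup p (T F)
      have h2 : ((Finset.Iic ((p, p) : ℕ × ℕ)).sup famm) (T F)
          ≤ ∑ i ∈ Finset.Iic ((p, p) : ℕ × ℕ), (Cs i : ℝ) * snorm' q ⇑F := by
        refine Seminorm.finset_sup_apply_le ?_ fun i hi => ?_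
        · exact Finset.sum_nonneg fun i _ =>
            mul_nonneg (Cs i).2 (Stmt9Aux.snorm_nonneg q ⇑F)
        · have h3 : famm i (T F) ≤ (Cs i : ℝ) * ((s i).sup fam) F := by
            have h4 := hle i F
            simpa [Seminorm.comp_apply, NNReal.smul_def, smul_eq_mul] using h4
          have h5 : famm i (T F) ≤ (Cs i : ℝ) * snorm' q ⇑F :=
            h3.trans (mul_le_mul_of_nonneg_left (hsupq i hi) (Cs i).2)
          refine h5.trans ?_
          exact Finset.single_le_sum (f := fun i => (Cs i : ℝ) * snorm' q ⇑F)
            (fun i _ => mul_nonneg (Cs i).2 (Stmt9Aux.snorm_nonneg q ⇑F)) hi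
      calc snorm' p ⇑(T F) ≤ 2 ^ p * ((Finset.Iic ((p, p) : ℕ × ℕ)).sup famm) (T F) := h1
        _ ≤ 2 ^ p * ∑ i ∈ Finset.Iic ((p, p) : ℕ × ℕ), (Cs i : ℝ) * snorm' q ⇑F := by
            have h2p : (0:ℝ) ≤ 2 ^ p := by positivity
            exact mul_le_mul_of_nonneg_left h2 h2p
        _ = 2 ^ p * (∑ i ∈ Finset.Iic ((p, p) : ℕ × ℕ), (Cs i : ℝ)) * snorm' q ⇑F := by
            rw [← Finset.sum_mul]; ring
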